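/- Let 0 < μ < L, let x_i, x_j, g_i, g_j ∈ E and f_i, f_j ∈ ℝ, and define Q^func_{μ,L} = f_j − f_i − ⟪g_i, x_j − x_i⟫ − (1/(2(1 − μ/L)))·((1/L)‖g_i − g_j‖² + μ‖x_i − x_j‖² − (2μ/L)⟪g_i − g_j, x_i − x_j⟫). Then there exist constants M > 0 and η₀ > 0 such that for all η ∈ (0, η₀), |Q^set_{η²μ, η²L}(i,j)(η) − Q^func_{μ,L}| ≤ M·η². -/

import Mathlib

open Metric Set
open scoped RealInnerProductSpace

noncomputable section

/-- The point `ζ_i(η) = (x_i/η, f_i)` in `E × ℝ` with the `ℓ²` product structure. -/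
def zetaPt {d : ℕ} (x : EuclideanSpace ℝ (Fin d)) (f η : ℝ) :
    WithLp 2 (EuclideanSpace ℝ (Fin d) × ℝ) :=
  (WithLp.equiv 2 (EuclideanSpace ℝ (Fin d) × ℝ)).symm (η⁻¹ • x, f)

/-- The unit vector `ν_i(η) = (η g_i, -1) / ‖(η g_i, -1)‖` in `E × ℝ`. -/
def nuVec {d : ℕ} (g : EuclideanSpace ℝ (Fin d)) (η : ℝ) :
    WithLp 2 (EuclideanSpace ℝ (Fin d) × ℝ) :=
  ‖(WithLp.equiv 2 (EuclideanSpace ℝ (Fin d) × ℝ)).symm (η • g, (-1 : ℝ))‖⁻¹ •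
    (WithLp.equiv 2 (EuclideanSpace ℝ (Fin d) × ℝ)).symm (η • g, (-1 : ℝ))

/-- The set-interpolation quantity
`Q^set_{a,b}(i,j)(η) = (a/(2(1-a/b))) ((1/a-1/b)² - ‖ζ_j - (1/b)ν_j - ζ_i + (1/a)ν_i‖²)`. -/
def Qset {d : ℕ} (a b : ℝ) (xi gi : EuclideanSpace ℝ (Fin d)) (fi : ℝ)
    (xj gj : EuclideanSpace ℝ (Fin d)) (fj : ℝ) (η : ℝ) : ℝ :=
  a / (2 * (1 - a / b)) *
    ((1 / a - 1 / b) ^ 2 -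
      ‖zetaPt xj fj η - (1 / b) • nuVec gj η - zetaPt xi fi η + (1 / a) • nuVec gi η‖ ^ 2)

/-- The function-interpolation quantity `Q^func_{μ,L}`. -/
def Qfunc {d : ℕ} (μ L : ℝ) (xi gi : EuclideanSpace ℝ (Fin d)) (fi : ℝ)
    (xj gj : EuclideanSpace ℝ (Fin d)) (fj : ℝ) : ℝ :=
  fj - fi - ⟪gi, xj - xi⟫ -
    1 / (2 * (1 - μ / L)) *
      ((1 / L) * ‖gi - gj‖ ^ 2 + μ * ‖xi - xj‖ ^ 2 - 2 * μ / L * ⟪gi - gj, xi - xj⟫)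

/-- `s(t) = √(1 + t ‖g‖²)`, so that `‖(η g, -1)‖ = s(η²)`. -/
def sfun {d : ℕ} (g : EuclideanSpace ℝ (Fin d)) (t : ℝ) : ℝ := Real.sqrt (1 + t * ‖g‖ ^ 2)

lemma sfun_pos {d : ℕ} (g : EuclideanSpace ℝ (Fin d)) {t : ℝ} (ht : 0 ≤ t) : 0 < sfun g t :=
  Real.sqrt_pos.2 (by positivity)

lemma sfun_sq {d : ℕ} (g : EuclideanSpace ℝ (Fin d)) {t : ℝ} (ht : 0 ≤ t) :
    sfun g t ^ 2 = 1 + t * ‖g‖ ^ 2 :=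
  Real.sq_sqrt (by positivity)

@[simp] lemma sfun_zero {d : ℕ} (g : EuclideanSpace ℝ (Fin d)) : sfun g 0 = 1 := by simp [sfun]

/-- The quantity `Q^set_{η²μ,η²L}` as a smooth function of `t = η²`. -/
def phiA {d : ℕ} (μ L : ℝ) (xi gi : EuclideanSpace ℝ (Fin d)) (fi : ℝ)
    (xj gj : EuclideanSpace ℝ (Fin d)) (fj : ℝ) (t : ℝ) : ℝ :=
  μ / (2 * (1 - μ / L)) *
    (((1 / μ - 1 / L) - (1 / (L * sfun gj t) - 1 / (μ * sfun gi t))) *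
        (‖gi‖ ^ 2 / (μ * sfun gi t * (sfun gi t + 1)) -
          ‖gj‖ ^ 2 / (L * sfun gj t * (sfun gj t + 1))) -
      ‖xj - xi + (1 / (μ * sfun gi t)) • gi - (1 / (L * sfun gj t)) • gj‖ ^ 2 -
      2 * (fj - fi) * (1 / (L * sfun gj t) - 1 / (μ * sfun gi t)) - t * (fj - fi) ^ 2)

lemma nu_norm {d : ℕ} (g : EuclideanSpace ℝ (Fin d)) (η : ℝ) :
    ‖(WithLp.equiv 2 (EuclideanSpace ℝ (Fin d) × ℝ)).symm (η • g, (-1 : ℝ))‖ = sfun g (η ^ 2) := by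
  rw [WithLp.prod_norm_eq_of_L2, sfun]
  simp [WithLp.equiv_symm_apply, WithLp.toLp_fst, WithLp.toLp_snd, norm_smul, mul_pow, sq_abs]
  ring_nf

lemma scalar_main (η μ L T W F : ℝ) (hη : η ≠ 0) (hμ : μ ≠ 0) (hL : L ≠ 0)
    (hLμ : L - μ ≠ 0) :
    η ^ 2 * μ / (2 * (1 - η ^ 2 * μ / (η ^ 2 * L))) *
        ((1 / (η ^ 2 * μ) - 1 / (η ^ 2 * L)) ^ 2 -
          (η⁻¹ ^ 2 * W + (F + η⁻¹ ^ 2 * T) ^ 2)) =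
      μ / (2 * (1 - μ / L)) *
        ((1 / μ - 1 / L - T) * ((1 / μ - 1 / L + T) / η ^ 2) - W - 2 * F * T - η ^ 2 * F ^ 2) := by
  have hK : (1 : ℝ) - μ / L ≠ 0 := by
    rw [sub_ne_zero]; intro h; apply hLμ; field_simp at h; linarith
  rw [mul_div_mul_left μ L (pow_ne_zero 2 hη)]
  field_simp
  ring

lemma Qset_eq_phi {d : ℕ} (μ L : ℝ) (hμ : 0 < μ) (hμL : μ < L)
    (xi gi : EuclideanSpace ℝ (Fin d)) (fi : ℝ) (xj gj : EuclideanSpace ℝ (Fin d)) (fj : ℝ)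
    {η : ℝ} (hη : 0 < η) :
    Qset (η ^ 2 * μ) (η ^ 2 * L) xi gi fi xj gj fj η = phiA μ L xi gi fi xj gj fj (η ^ 2) := by
  have hL : 0 < L := hμ.trans hμL
  have hμ0 : μ ≠ 0 := hμ.ne'
  have hL0 : L ≠ 0 := hL.ne'
  have hη0 : η ≠ 0 := hη.ne'
  have hLμ : L - μ ≠ 0 := sub_ne_zero.2 hμL.ne'
  set si := sfun gi (η ^ 2) with hsidef
  set sj := sfun gj (η ^ 2) with hsjdef
  have hsi0 : si ≠ 0 := (sfun_pos _ (sq_nonneg η)).ne'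
  have hsj0 : sj ≠ 0 := (sfun_pos _ (sq_nonneg η)).ne'
  have hsi1 : si + 1 ≠ 0 := by have := sfun_pos gi (sq_nonneg η); rw [← hsidef] at this; linarith
  have hsj1 : sj + 1 ≠ 0 := by have := sfun_pos gj (sq_nonneg η); rw [← hsjdef] at this; linarith
  have hsisq : si ^ 2 = 1 + η ^ 2 * ‖gi‖ ^ 2 := sfun_sq _ (sq_nonneg η)
  have hsjsq : sj ^ 2 = 1 + η ^ 2 * ‖gj‖ ^ 2 := sfun_sq _ (sq_nonneg η)
  set X : EuclideanSpace ℝ (Fin d) :=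
    xj - xi + (1 / (μ * si)) • gi - (1 / (L * sj)) • gj with hX
  set v := zetaPt xj fj η - (1 / (η ^ 2 * L)) • nuVec gj η - zetaPt xi fi η +
      (1 / (η ^ 2 * μ)) • nuVec gi η with hv
  have hfst : v.fst = η⁻¹ • X := by
    simp only [hv, hX, zetaPt, nuVec, nu_norm, WithLp.add_fst, WithLp.sub_fst, WithLp.smul_fst,
      show ∀ p : EuclideanSpace ℝ (Fin d) × ℝ, ((WithLp.equiv 2 _).symm p).fst = p.fst from fun _ => rfl, ← hsidef, ← hsjdef]
    match_scalars <;> field_simp <;> ring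
  have hsnd : v.snd = (fj - fi) + (η⁻¹) ^ 2 * (1 / (L * sj) - 1 / (μ * si)) := by
    simp only [hv, zetaPt, nuVec, nu_norm, WithLp.add_snd, WithLp.sub_snd, WithLp.smul_snd,
      show ∀ p : EuclideanSpace ℝ (Fin d) × ℝ, ((WithLp.equiv 2 _).symm p).snd = p.snd from fun _ => rfl, ← hsidef, ← hsjdef, smul_eq_mul]
    field_simp
    ring
  have hnv : ‖v‖ ^ 2 = (η⁻¹) ^ 2 * ‖X‖ ^ 2 +
      ((fj - fi) + (η⁻¹) ^ 2 * (1 / (L * sj) - 1 / (μ * si))) ^ 2 := by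
    rw [WithLp.prod_norm_sq_eq_of_L2, hfst, hsnd, norm_smul, mul_pow]
    simp [Real.norm_eq_abs, sq_abs]
  have hU : ‖gi‖ ^ 2 / (μ * si * (si + 1)) - ‖gj‖ ^ 2 / (L * sj * (sj + 1)) =
      ((1 / μ - 1 / L) + (1 / (L * sj) - 1 / (μ * si))) / η ^ 2 := by
    field_simp
    linear_combination (-(L*sj*(sj+1))) * hsisq + (μ*si*(si+1)) * hsjsq
  simp only [Qset, phiA, ← hsidef, ← hsjdef, ← hX, ← hv, hnv, hU]
  exact scalar_main η μ L _ _ _ hη0 hμ0 hL0 hLμ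

lemma phiA_zero {d : ℕ} (μ L : ℝ) (hμ : 0 < μ) (hμL : μ < L)
    (xi gi : EuclideanSpace ℝ (Fin d)) (fi : ℝ) (xj gj : EuclideanSpace ℝ (Fin d)) (fj : ℝ) :
    phiA μ L xi gi fi xj gj fj 0 = Qfunc μ L xi gi fi xj gj fj := by
  have hL : 0 < L := hμ.trans hμL
  have hμ0 : μ ≠ 0 := hμ.ne'
  have hL0 : L ≠ 0 := hL.ne'
  have hLμ : L - μ ≠ 0 := sub_ne_zero.2 hμL.ne'
  have hK : (1 : ℝ) - μ / L ≠ 0 := by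
    rw [sub_ne_zero]; intro h; apply hLμ; field_simp at h; linarith
  have hs : ∀ g : EuclideanSpace ℝ (Fin d), sfun g 0 = 1 := by simp [sfun]
  simp only [phiA, Qfunc, hs, mul_one, zero_mul, sub_zero]
  simp only [← real_inner_self_eq_norm_sq]
  simp only [inner_add_left, inner_add_right, inner_sub_left, inner_sub_right,
    real_inner_smul_left, real_inner_smul_right]
  rw [real_inner_comm xj xi, real_inner_comm gi xi, real_inner_comm gj xi,
    real_inner_comm gi xj, real_inner_comm gj xj, real_inner_comm gj gi]
  field_simp
  ring

lemma phiA_diff {d : ℕ} (μ L : ℝ) (hμ : 0 < μ) (hμL : μ < L)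
    (xi gi : EuclideanSpace ℝ (Fin d)) (fi : ℝ) (xj gj : EuclideanSpace ℝ (Fin d)) (fj : ℝ) :
    DifferentiableAt ℝ (phiA μ L xi gi fi xj gj fj) 0 := by
  have hL : 0 < L := hμ.trans hμL
  have hμ0 : μ ≠ 0 := hμ.ne'
  have hL0 : L ≠ 0 := hL.ne'
  have hs : ∀ g : EuclideanSpace ℝ (Fin d), DifferentiableAt ℝ (sfun g) 0 := by
    intro g
    apply DifferentiableAt.sqrt (by fun_prop)
    norm_num
  have hsi : DifferentiableAt ℝ (fun t => 1 / (μ * sfun gi t)) 0 := by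
    apply (differentiableAt_const (1:ℝ)).div ((differentiableAt_const μ).mul (hs gi))
    simp [hμ0]
  have hsj : DifferentiableAt ℝ (fun t => 1 / (L * sfun gj t)) 0 := by
    apply (differentiableAt_const (1:ℝ)).div ((differentiableAt_const L).mul (hs gj))
    simp [hL0]
  have hui : DifferentiableAt ℝ (fun t => ‖gi‖ ^ 2 / (μ * sfun gi t * (sfun gi t + 1))) 0 := by
    apply (differentiableAt_const _).div
      (((differentiableAt_const μ).mul (hs gi)).mul ((hs gi).add (differentiableAt_const 1)))
    simp [hμ0]
  have huj : DifferentiableAt ℝ (fun t => ‖gj‖ ^ 2 / (L * sfun gj t * (sfun gj t + 1))) 0 := by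
    apply (differentiableAt_const _).div
      (((differentiableAt_const L).mul (hs gj)).mul ((hs gj).add (differentiableAt_const 1)))
    simp [hL0]
  have hX : DifferentiableAt ℝ
      (fun t => xj - xi + (1 / (μ * sfun gi t)) • gi - (1 / (L * sfun gj t)) • gj) 0 :=
    ((differentiableAt_const _).add (hsi.smul_const gi)).sub (hsj.smul_const gj)
  have hXn : DifferentiableAt ℝ
      (fun t => ‖xj - xi + (1 / (μ * sfun gi t)) • gi - (1 / (L * sfun gj t)) • gj‖ ^ 2) 0 := by
    have h2 := DifferentiableAt.inner ℝ hX hX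
    simpa only [real_inner_self_eq_norm_sq] using h2
  unfold phiA
  apply (differentiableAt_const _).mul
  apply DifferentiableAt.sub
  apply DifferentiableAt.sub
  apply DifferentiableAt.sub
  · exact ((differentiableAt_const _).sub (hsj.sub hsi)).mul (hui.sub huj)
  · exact hXn
  · exact (differentiableAt_const _).mul (hsj.sub hsi)
  · exact differentiableAt_fun_id.mul (differentiableAt_const _)

/-- `Q^set_{η²μ, η²L}(i,j)(η) = Q^func_{μ,L}(i,j) + O(η²)` as `η → 0`. -/
theorem Qset_approx_Qfunc {d : ℕ} (hd : 1 ≤ d) (μ L : ℝ) (hμ : 0 < μ) (hμL : μ < L)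
    (xi xj gi gj : EuclideanSpace ℝ (Fin d)) (fi fj : ℝ) :
    ∃ M > (0 : ℝ), ∃ η₀ > (0 : ℝ), ∀ η : ℝ, 0 < η → η < η₀ →
      |Qset (η ^ 2 * μ) (η ^ 2 * L) xi gi fi xj gj fj η - Qfunc μ L xi gi fi xj gj fj| ≤
        M * η ^ 2 := by
  set φ := phiA μ L xi gi fi xj gj fj with hφ
  obtain ⟨a, ha⟩ : ∃ a, HasDerivAt φ a 0 :=
    ⟨_, (phiA_diff μ L hμ hμL xi gi fi xj gj fj).hasDerivAt⟩
  have hlo := (hasDerivAt_iff_isLittleO.mp ha).def one_pos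
  rw [Metric.eventually_nhds_iff] at hlo
  obtain ⟨ε, hε, hev⟩ := hlo
  refine ⟨|a| + 1, by positivity, Real.sqrt ε, Real.sqrt_pos.2 hε, ?_⟩
  intro η hη hηε
  have ht : dist (η ^ 2) (0 : ℝ) < ε := by
    rw [Real.dist_eq, sub_zero, abs_of_nonneg (sq_nonneg η)]
    calc η ^ 2 < Real.sqrt ε ^ 2 := by
          exact pow_lt_pow_left₀ hηε hη.le (by norm_num)
      _ = ε := Real.sq_sqrt hε.le
  have hb := hev ht
  simp only [sub_zero, smul_eq_mul, Real.norm_eq_abs, one_mul] at hb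
  rw [Qset_eq_phi μ L hμ hμL xi gi fi xj gj fj hη,
    ← phiA_zero μ L hμ hμL xi gi fi xj gj fj, ← hφ]
  have habs : |η ^ 2| = η ^ 2 := abs_of_nonneg (sq_nonneg η)
  rw [habs] at hb
  calc |φ (η ^ 2) - φ 0| = |(φ (η ^ 2) - φ 0 - η ^ 2 * a) + η ^ 2 * a| := by ring_nf
    _ ≤ |φ (η ^ 2) - φ 0 - η ^ 2 * a| + |η ^ 2 * a| := abs_add_le _ _
    _ ≤ η ^ 2 + η ^ 2 * |a| := by
        refine add_le_add hb ?_
        rw [abs_mul, habs]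
    _ = (|a| + 1) * η ^ 2 := by ring
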